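/- For 0 < λ < ρ < σ < 2π and θ > 0, ∫_λ^ρ ∫₀^σ Φ_σ(θ, φ, φ₀) dφ₀ dφ = (2(ρ - λ)/θ) sinh(πθ), where Φ_σ is as in the wedge Green's function: Φ_σ(θ,φ,φ₀) := cosh((π - |φ₀ - φ|)θ) + (sinh(πθ)/sinh(σθ)) cosh((φ + φ₀ - σ)θ) + (sinh((π-σ)θ)/sinh(σθ)) cosh((φ - φ₀)θ). -/

import Mathlib

open Real MeasureTheory

lemma integral_cosh_lin (c d a b : ℝ) (hc : c ≠ 0) :
    ∫ x in a..b, Real.cosh (c * x + d)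
      = (Real.sinh (c * b + d) - Real.sinh (c * a + d)) / c := by
  have h : ∀ x ∈ Set.uIcc a b,
      HasDerivAt (fun y => Real.sinh (c * y + d) / c) (Real.cosh (c * x + d)) x := by
    intro x _
    have h1 : HasDerivAt (fun y : ℝ => c * y + d) c x := by
      simpa using ((hasDerivAt_id x).const_mul c).add_const d
    have h2 := (h1.sinh).div_const c
    simpa [mul_comm, mul_div_assoc, mul_div_cancel_left₀ _ hc] using h2
  rw [intervalIntegral.integral_eq_sub_of_hasDerivAt h
    (Continuous.intervalIntegrable (by continuity) a b)]
  ring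

lemma key_ident (σ θ φ : ℝ) :
    (Real.sinh ((π - φ) * θ) + Real.sinh ((π + φ - σ) * θ)) * Real.sinh (σ * θ)
      = (Real.sinh (π * θ) + Real.sinh ((π - σ) * θ))
        * (Real.sinh (φ * θ) - Real.sinh ((φ - σ) * θ)) := by
  have e1 : (π - φ) * θ = π * θ - φ * θ := by ring
  have e2 : (π + φ - σ) * θ = (π * θ - σ * θ) + φ * θ := by ring
  have e3 : (π - σ) * θ = π * θ - σ * θ := by ring
  have e4 : (φ - σ) * θ = φ * θ - σ * θ := by ring
  rw [e1, e2, e3, e4, Real.sinh_sub, Real.sinh_add, Real.sinh_sub, Real.sinh_sub,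
    Real.cosh_sub]
  linear_combination (Real.sinh (π * θ) * Real.sinh (φ * θ)) *
    Real.cosh_sq_sub_sinh_sq (σ * θ)

noncomputable def Phi (σ θ φ φ₀ : ℝ) : ℝ :=
  Real.cosh ((π - |φ₀ - φ|) * θ) +
    Real.sinh (π * θ) / Real.sinh (σ * θ) * Real.cosh ((φ + φ₀ - σ) * θ) +
    Real.sinh ((π - σ) * θ) / Real.sinh (σ * θ) * Real.cosh ((φ - φ₀) * θ)

set_option maxHeartbeats 1000000 in
lemma inner_int (σ θ φ : ℝ) (hθ : 0 < θ) (h0 : 0 ≤ φ) (hφσ : φ ≤ σ)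
    (hs : Real.sinh (σ * θ) ≠ 0) :
    ∫ φ₀ in (0:ℝ)..σ, Phi σ θ φ φ₀ = 2 / θ * Real.sinh (π * θ) := by
  have hθ' : θ ≠ 0 := ne_of_gt hθ
  have hint1 : ∀ a b : ℝ, IntervalIntegrable
      (fun φ₀ => Real.cosh ((π - |φ₀ - φ|) * θ)) volume a b := fun a b =>
    Continuous.intervalIntegrable (by continuity) a b
  have hint2 : IntervalIntegrable
      (fun φ₀ => Real.sinh (π * θ) / Real.sinh (σ * θ) * Real.cosh ((φ + φ₀ - σ) * θ))
      volume 0 σ := Continuous.intervalIntegrable (by continuity) 0 σ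
  have hint3 : IntervalIntegrable
      (fun φ₀ => Real.sinh ((π - σ) * θ) / Real.sinh (σ * θ) * Real.cosh ((φ - φ₀) * θ))
      volume 0 σ := Continuous.intervalIntegrable (by continuity) 0 σ
  simp only [Phi]
  rw [intervalIntegral.integral_add ((hint1 0 σ).add hint2) hint3,
    intervalIntegral.integral_add (hint1 0 σ) hint2]
  -- first piece, split at φ
  have habs : (∫ φ₀ in (0:ℝ)..σ, Real.cosh ((π - |φ₀ - φ|) * θ))
      = (∫ φ₀ in (0:ℝ)..φ, Real.cosh ((π - |φ₀ - φ|) * θ))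
      + (∫ φ₀ in φ..σ, Real.cosh ((π - |φ₀ - φ|) * θ)) :=
    (intervalIntegral.integral_add_adjacent_intervals (hint1 0 φ) (hint1 φ σ)).symm
  have hL : (∫ φ₀ in (0:ℝ)..φ, Real.cosh ((π - |φ₀ - φ|) * θ))
      = (Real.sinh (π * θ) - Real.sinh ((π - φ) * θ)) / θ := by
    have e : (∫ φ₀ in (0:ℝ)..φ, Real.cosh ((π - |φ₀ - φ|) * θ))
        = ∫ φ₀ in (0:ℝ)..φ, Real.cosh (θ * φ₀ + (π - φ) * θ) := by
      apply intervalIntegral.integral_congr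
      intro x hx
      rw [Set.uIcc_of_le h0] at hx
      show Real.cosh ((π - |x - φ|) * θ) = Real.cosh (θ * x + (π - φ) * θ)
      rw [abs_of_nonpos (by linarith [hx.2] : x - φ ≤ 0)]
      congr 1; ring
    rw [e, integral_cosh_lin _ _ _ _ hθ']
    congr 2 <;> ring
  have hR : (∫ φ₀ in φ..σ, Real.cosh ((π - |φ₀ - φ|) * θ))
      = (Real.sinh (π * θ) - Real.sinh ((π + φ - σ) * θ)) / θ := by
    have e : (∫ φ₀ in φ..σ, Real.cosh ((π - |φ₀ - φ|) * θ))
        = ∫ φ₀ in φ..σ, Real.cosh ((-θ) * φ₀ + (π + φ) * θ) := by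
      apply intervalIntegral.integral_congr
      intro x hx
      rw [Set.uIcc_of_le hφσ] at hx
      show Real.cosh ((π - |x - φ|) * θ) = Real.cosh (-θ * x + (π + φ) * θ)
      rw [abs_of_nonneg (by linarith [hx.1] : 0 ≤ x - φ)]
      congr 1; ring
    rw [e, integral_cosh_lin _ _ _ _ (neg_ne_zero.mpr hθ')]
    rw [div_neg, ← neg_div, neg_sub]
    congr 2 <;> ring
  have h2 : (∫ φ₀ in (0:ℝ)..σ, Real.sinh (π * θ) / Real.sinh (σ * θ) * Real.cosh ((φ + φ₀ - σ) * θ))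
      = Real.sinh (π * θ) / Real.sinh (σ * θ)
        * ((Real.sinh (φ * θ) - Real.sinh ((φ - σ) * θ)) / θ) := by
    rw [intervalIntegral.integral_const_mul]
    congr 1
    have e : (∫ φ₀ in (0:ℝ)..σ, Real.cosh ((φ + φ₀ - σ) * θ))
        = ∫ φ₀ in (0:ℝ)..σ, Real.cosh (θ * φ₀ + (φ - σ) * θ) := by
      apply intervalIntegral.integral_congr
      intro x _
      show Real.cosh ((φ + x - σ) * θ) = Real.cosh (θ * x + (φ - σ) * θ)
      congr 1; ring
    rw [e, integral_cosh_lin _ _ _ _ hθ']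
    congr 2 <;> ring
  have h3 : (∫ φ₀ in (0:ℝ)..σ, Real.sinh ((π - σ) * θ) / Real.sinh (σ * θ) * Real.cosh ((φ - φ₀) * θ))
      = Real.sinh ((π - σ) * θ) / Real.sinh (σ * θ)
        * ((Real.sinh (φ * θ) - Real.sinh ((φ - σ) * θ)) / θ) := by
    rw [intervalIntegral.integral_const_mul]
    congr 1
    have e : (∫ φ₀ in (0:ℝ)..σ, Real.cosh ((φ - φ₀) * θ))
        = ∫ φ₀ in (0:ℝ)..σ, Real.cosh ((-θ) * φ₀ + φ * θ) := by
      apply intervalIntegral.integral_congr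
      intro x _
      show Real.cosh ((φ - x) * θ) = Real.cosh (-θ * x + φ * θ)
      congr 1; ring
    rw [e, integral_cosh_lin _ _ _ _ (neg_ne_zero.mpr hθ')]
    rw [div_neg, ← neg_div, neg_sub]
    congr 2 <;> ring
  rw [habs, hL, hR, h2, h3]
  have key := key_ident σ θ φ
  have key' : Real.sinh ((π - φ) * θ) + Real.sinh ((π + φ - σ) * θ)
      = (Real.sinh (π * θ) + Real.sinh ((π - σ) * θ))
        * (Real.sinh (φ * θ) - Real.sinh ((φ - σ) * θ)) / Real.sinh (σ * θ) := by
    rw [eq_div_iff hs]; exact key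
  linear_combination (-1 / θ) * key'

theorem stmt15 (σ ρ lam θ : ℝ) (hlam : 0 < lam) (hlr : lam < ρ) (hrs : ρ < σ)
    (hσ : σ < 2 * π) (hθ : 0 < θ) :
    ∫ φ in lam..ρ, ∫ φ₀ in (0:ℝ)..σ, Phi σ θ φ φ₀
      = (2 * (ρ - lam) / θ) * Real.sinh (π * θ) := by
  have hs : Real.sinh (σ * θ) ≠ 0 := by
    have : 0 < Real.sinh (σ * θ) := by
      rw [Real.sinh_pos_iff]; exact mul_pos (by linarith) hθ
    exact ne_of_gt this
  have hconst : ∫ φ in lam..ρ, (∫ φ₀ in (0:ℝ)..σ, Phi σ θ φ φ₀)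
      = ∫ _ in lam..ρ, (2 / θ * Real.sinh (π * θ)) := by
    apply intervalIntegral.integral_congr
    intro x hx
    rw [Set.uIcc_of_le (le_of_lt hlr)] at hx
    exact inner_int σ θ x hθ (by linarith [hx.1]) (by linarith [hx.2]) hs
  rw [hconst, intervalIntegral.integral_const, smul_eq_mul]
  field_simp
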